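/- arXiv:1909.03932 — 2 statements merged into one kernel-verified Lean document; each statement's English description precedes it below -/
import Mathlib

section
/- Let Σ be a real symmetric positive definite n×n matrix and let 1 ≤ r ≤ n. For every real symmetric positive semidefinite n×n matrix Ω with rank(Ω) ≤ r, Σ − Ω positive semidefinite, and Σ − Ω diagonal, and for every Λ ∈ S_0^n, the following weak duality inequality holds: ‖Σ − Ω‖_F² ≥ −‖Σ + Λ‖_r² + 2⟨Λ, Σ⟩ + ‖Σ‖_F². -/
open Matrix

/-- The `k`-th largest singular value (1-indexed) of a real square matrix,
with junk value `0` when `k` is out of range. -/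
noncomputable def sv {n : ℕ} (A : Matrix (Fin n) (Fin n) ℝ) (k : ℕ) : ℝ :=
  if h : k - 1 < n then
    (fun i => Real.sqrt ((Matrix.isHermitian_iff_isSymm.mpr (Matrix.isSymm_transpose_mul_self A)).eigenvalues i))
      (Tuple.sort (fun i : Fin n =>
        Real.sqrt ((Matrix.isHermitian_iff_isSymm.mpr (Matrix.isSymm_transpose_mul_self A)).eigenvalues i))
        (Fin.rev ⟨k - 1, h⟩))
  else 0

/-- Operator (spectral) norm: the largest singular value. -/
noncomputable def opNorm {n : ℕ} (A : Matrix (Fin n) (Fin n) ℝ) : ℝ := sv A 1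

/-- Frobenius norm. -/
noncomputable def frobNorm {n : ℕ} (A : Matrix (Fin n) (Fin n) ℝ) : ℝ :=
  Real.sqrt (∑ i, ∑ j, (A i j) ^ 2)

/-- The `r`-norm: square root of the sum of squares of the `r` largest singular values. -/
noncomputable def rNorm {n : ℕ} (A : Matrix (Fin n) (Fin n) ℝ) (r : ℕ) : ℝ :=
  Real.sqrt (∑ k ∈ Finset.range r, (sv A (k + 1)) ^ 2)

/-- Frobenius (trace) inner product of square matrices. -/
noncomputable def minner {n : ℕ} (A B : Matrix (Fin n) (Fin n) ℝ) : ℝ :=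
  (Aᵀ * B).trace

/-- The ranges (column spaces) of `A` and `B` are orthogonal. -/
def rangesOrth {n : ℕ} (A B : Matrix (Fin n) (Fin n) ℝ) : Prop :=
  ∀ x y : Fin n → ℝ, (A.mulVec x) ⬝ᵥ (B.mulVec y) = 0

section Aux

variable {n r : ℕ}


lemma spectral_apply (Ω : Matrix (Fin n) (Fin n) ℝ) (h : Ω.IsHermitian) (j k : Fin n) :
    Ω j k = ∑ i, h.eigenvalues i * (h.eigenvectorUnitary : Matrix (Fin n) (Fin n) ℝ) j i
      * (h.eigenvectorUnitary : Matrix (Fin n) (Fin n) ℝ) k i := by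
  conv_lhs => rw [h.spectral_theorem]
  simp [Matrix.mul_apply, Matrix.diagonal_apply, Finset.sum_ite_eq, conjTranspose_apply,
    Finset.mul_sum, Finset.sum_mul]
  congr 1; ext i; ring

lemma unitary_col_orth (Ω : Matrix (Fin n) (Fin n) ℝ) (h : Ω.IsHermitian) (i i' : Fin n) :
    ∑ j, (h.eigenvectorUnitary : Matrix (Fin n) (Fin n) ℝ) j i
      * (h.eigenvectorUnitary : Matrix (Fin n) (Fin n) ℝ) j i' = if i = i' then 1 else 0 := by
  have h1 : (star (h.eigenvectorUnitary : Matrix (Fin n) (Fin n) ℝ)) * h.eigenvectorUnitary = 1 :=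
    Matrix.mem_unitaryGroup_iff'.mp h.eigenvectorUnitary.2
  have := congrFun (congrFun h1 i) i'
  simpa [Matrix.mul_apply, conjTranspose_apply, Matrix.one_apply] using this

lemma unitary_row_orth (Ω : Matrix (Fin n) (Fin n) ℝ) (h : Ω.IsHermitian) (j j' : Fin n) :
    ∑ i, (h.eigenvectorUnitary : Matrix (Fin n) (Fin n) ℝ) j i
      * (h.eigenvectorUnitary : Matrix (Fin n) (Fin n) ℝ) j' i = if j = j' then 1 else 0 := by
  have h1 : (h.eigenvectorUnitary : Matrix (Fin n) (Fin n) ℝ) * star (h.eigenvectorUnitary : Matrix (Fin n) (Fin n) ℝ) = 1 :=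
    Matrix.mem_unitaryGroup_iff.mp h.eigenvectorUnitary.2
  have := congrFun (congrFun h1 j) j'
  simpa [Matrix.mul_apply, conjTranspose_apply, Matrix.one_apply] using this


/-- generic rearrangement: quadratic form of an entrywise spectral decomposition -/
lemma quad_expand (e : Fin n → ℝ) (W : Matrix (Fin n) (Fin n) ℝ) (u v : Fin n → ℝ) :
    ∑ j, ∑ k, (∑ l, e l * W j l * W k l) * (u j * v k)
      = ∑ l, e l * ((∑ j, W j l * u j) * (∑ k, W k l * v k)) := by
  simp_rw [Finset.sum_mul, Finset.mul_sum]
  rw [Finset.sum_congr rfl fun j _ => Finset.sum_comm, Finset.sum_comm]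
  refine Finset.sum_congr rfl fun l _ => ?_
  refine Finset.sum_congr rfl fun j _ => ?_
  refine Finset.sum_congr rfl fun k _ => ?_
  ring

lemma lp_bound {r : ℕ} (e c : Fin n → ℝ) (T : Finset (Fin n))
    (hT : T.card = r) (hr : 0 < r)
    (htop : ∀ i ∈ T, ∀ j ∉ T, e j ≤ e i)
    (he : ∀ j, 0 ≤ e j) (hc0 : ∀ j, 0 ≤ c j) (hc1 : ∀ j, c j ≤ 1)
    (hcs : ∑ j, c j ≤ (r : ℝ)) :
    ∑ j, e j * c j ≤ ∑ j ∈ T, e j := by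
  have hTne : T.Nonempty := Finset.card_pos.mp (hT ▸ hr)
  obtain ⟨i₀, hi₀T, hi₀⟩ := T.exists_min_image e hTne
  set t := e i₀ with ht
  have ht0 : 0 ≤ t := he i₀
  have hsplit : ∑ j ∈ T, e j * c j + ∑ j ∈ Tᶜ, e j * c j = ∑ j, e j * c j :=
    Finset.sum_add_sum_compl T _
  have h1 : ∑ j ∈ Tᶜ, e j * c j ≤ t * ∑ j ∈ Tᶜ, c j := by
    rw [Finset.mul_sum]
    refine Finset.sum_le_sum fun j hj => ?_
    exact mul_le_mul_of_nonneg_right (htop i₀ hi₀T j (by simpa using hj)) (hc0 j)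
  have hcsplit : ∑ j ∈ T, c j + ∑ j ∈ Tᶜ, c j = ∑ j, c j := Finset.sum_add_sum_compl T _
  have h2 : ∑ j ∈ Tᶜ, c j ≤ (r : ℝ) - ∑ j ∈ T, c j := by linarith
  have h3 : t * ∑ j ∈ Tᶜ, c j ≤ t * ((r:ℝ) - ∑ j ∈ T, c j) := mul_le_mul_of_nonneg_left h2 ht0
  have h4 : t * ((r:ℝ) - ∑ j ∈ T, c j) = ∑ j ∈ T, t * (1 - c j) := by
    simp only [mul_sub, mul_one, Finset.sum_sub_distrib, Finset.sum_const, nsmul_eq_mul,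
      ← Finset.mul_sum, hT]
    ring
  have h5 : ∑ j ∈ T, t * (1 - c j) ≤ ∑ j ∈ T, e j * (1 - c j) :=
    Finset.sum_le_sum fun j hj =>
      mul_le_mul_of_nonneg_right (hi₀ j hj) (by linarith [hc1 j])
  have h6 : ∑ j ∈ T, e j * c j + ∑ j ∈ T, e j * (1 - c j) = ∑ j ∈ T, e j := by
    rw [← Finset.sum_add_distrib]
    exact Finset.sum_congr rfl fun j _ => by ring
  linarith


lemma exists_topset (hr1 : 1 ≤ r) (hrn : r ≤ n) (M : Matrix (Fin n) (Fin n) ℝ) :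
    ∃ T : Finset (Fin n), T.card = r ∧
      (∀ i ∈ T, ∀ j ∉ T, (Matrix.isHermitian_iff_isSymm.mpr (Matrix.isSymm_transpose_mul_self M)).eigenvalues j
          ≤ (Matrix.isHermitian_iff_isSymm.mpr (Matrix.isSymm_transpose_mul_self M)).eigenvalues i) ∧
      ∑ l ∈ T, (Matrix.isHermitian_iff_isSymm.mpr (Matrix.isSymm_transpose_mul_self M)).eigenvalues l
        = ∑ k ∈ Finset.range r, (sv M (k + 1)) ^ 2 := by
  set hA := Matrix.isHermitian_iff_isSymm.mpr (Matrix.isSymm_transpose_mul_self M) with hhA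
  set ev := hA.eigenvalues with hev
  set g : Fin n → ℝ := fun i => Real.sqrt (ev i) with hg
  set σ := Tuple.sort g with hσ
  have hevnn : ∀ i, 0 ≤ ev i :=
    (Matrix.posSemidef_conjTranspose_mul_self M).eigenvalues_nonneg
  have hgsq : ∀ i, (g i) ^ 2 = ev i := fun i => Real.sq_sqrt (hevnn i)
  set U : Finset (Fin n) := Finset.univ.filter (fun k : Fin n => n - r ≤ (k : ℕ)) with hU
  refine ⟨U.image σ, ?_, ?_, ?_⟩
  · rw [Finset.card_image_of_injective _ (Equiv.injective σ)]
    rw [hU]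
    have hcard : (Finset.univ.filter (fun k : Fin n => n - r ≤ (k : ℕ))).card
        = (Finset.Ico (n - r) n).card := by
      refine Finset.card_bij' (fun (k : Fin n) (_ : _) => (k : ℕ))
        (fun (m : ℕ) (hm : m ∈ Finset.Ico (n - r) n) => ⟨m, (Finset.mem_Ico.mp hm).2⟩)
        ?_ ?_ ?_ ?_
      · intro k hk
        exact Finset.mem_Ico.mpr ⟨(Finset.mem_filter.mp hk).2, k.2⟩
      · intro m hm
        exact Finset.mem_filter.mpr ⟨Finset.mem_univ _, (Finset.mem_Ico.mp hm).1⟩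
      · intro k hk; rfl
      · intro m hm; rfl
    rw [hcard, Nat.card_Ico]
    omega
  · rintro i hi j hj
    obtain ⟨k, hkU, rfl⟩ := Finset.mem_image.mp hi
    have hkU' : n - r ≤ (k : ℕ) := (Finset.mem_filter.mp hkU).2
    set k' := σ.symm j with hk'
    have hj' : ¬ (n - r ≤ (k' : ℕ)) := by
      intro hle
      exact hj (Finset.mem_image.mpr ⟨k', Finset.mem_filter.mpr ⟨Finset.mem_univ _, hle⟩, by simp [hk']⟩)
    have hkk : k' ≤ k := by
      have : (k' : ℕ) < n - r := not_le.mp hj'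
      exact Fin.le_def.mpr (by omega)
    have hmono : g (σ k') ≤ g (σ k) := Tuple.monotone_sort g hkk
    have : j = σ k' := by simp [hk']
    rw [this, ← hgsq, ← hgsq]
    exact pow_le_pow_left₀ (Real.sqrt_nonneg _) hmono 2
  · rw [Finset.sum_image (fun a _ b _ h => Equiv.injective σ h)]
    refine Finset.sum_bij' (fun (k : Fin n) (_ : k ∈ U) => n - 1 - (k : ℕ))
      (fun (k : ℕ) (hk : k ∈ Finset.range r) =>
        Fin.rev ⟨k, lt_of_lt_of_le (Finset.mem_range.mp hk) hrn⟩) ?_ ?_ ?_ ?_ ?_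
    · intro k hk
      have h1 : n - r ≤ (k : ℕ) := (Finset.mem_filter.mp hk).2
      have h2 : (k : ℕ) < n := k.2
      exact Finset.mem_range.mpr (show n - 1 - (k:ℕ) < r by omega)
    · intro k hk
      have hkr := Finset.mem_range.mp hk
      refine Finset.mem_filter.mpr ⟨Finset.mem_univ _, ?_⟩
      simp only [Fin.val_rev]
      omega
    · intro k hk
      have h1 : n - r ≤ (k : ℕ) := (Finset.mem_filter.mp hk).2
      have h2 : (k : ℕ) < n := k.2
      apply Fin.ext
      simp only [Fin.val_rev]
      omega
    · intro k hk
      have hkr := Finset.mem_range.mp hk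
      simp only [Fin.val_rev]
      omega
    · intro k hk
      have h1 : n - r ≤ (k : ℕ) := (Finset.mem_filter.mp hk).2
      have h2 : (k : ℕ) < n := k.2
      have h3 : (n - 1 - (k:ℕ)) + 1 - 1 < n := by omega
      rw [sv, dif_pos h3]
      have h4 : Fin.rev ⟨(n - 1 - (k:ℕ)) + 1 - 1, h3⟩ = k := by
        apply Fin.ext; simp only [Fin.val_rev]; omega
      rw [h4]
      exact (hgsq (σ k)).symm


lemma mix (B : Matrix (Fin n) (Fin n) ℝ)
    (hB : ∀ j k, ∑ i, B j i * B k i = if j = k then 1 else 0)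
    (C : Fin n → ℝ) (hC : ∑ j, C j * C j = 1) :
    ∑ i, (∑ j, C j * B j i) ^ 2 = 1 := by
  have : ∀ i : Fin n, (∑ j, C j * B j i) ^ 2
      = ∑ j, ∑ k, (C j * C k) * (B j i * B k i) := by
    intro i
    rw [pow_two, Finset.sum_mul_sum]
    exact Finset.sum_congr rfl fun j _ => Finset.sum_congr rfl fun k _ => by ring
  simp_rw [this]
  rw [Finset.sum_comm]
  have : ∀ j : Fin n, ∑ i, ∑ k, (C j * C k) * (B j i * B k i)
      = ∑ k, (C j * C k) * (∑ i, B j i * B k i) := by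
    intro j
    rw [Finset.sum_comm]
    exact Finset.sum_congr rfl fun k _ => by rw [Finset.mul_sum]
  simp_rw [this, hB]
  simp [Finset.sum_ite_eq', hC]

lemma swap3 (f : Fin n → Fin n → ℝ) (lam : Fin n → ℝ) (V : Matrix (Fin n) (Fin n) ℝ) :
    ∑ j, ∑ k, f j k * (∑ i, lam i * V j i * V k i)
      = ∑ i, lam i * (∑ j, ∑ k, f j k * (V j i * V k i)) := by
  simp_rw [Finset.mul_sum]
  rw [Finset.sum_congr rfl fun j _ => Finset.sum_comm, Finset.sum_comm]
  refine Finset.sum_congr rfl fun i _ => ?_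
  refine Finset.sum_congr rfl fun j _ => ?_
  refine Finset.sum_congr rfl fun k _ => ?_
  ring

lemma minner_eq_sum (A B : Matrix (Fin n) (Fin n) ℝ) :
    minner A B = ∑ j, ∑ k, A j k * B j k := by
  simp only [minner, Matrix.trace, Matrix.diag, Matrix.mul_apply, Matrix.transpose_apply]
  exact Finset.sum_comm

lemma sq_frobNorm (A : Matrix (Fin n) (Fin n) ℝ) :
    (frobNorm A) ^ 2 = ∑ i, ∑ j, (A i j) ^ 2 :=
  Real.sq_sqrt (by positivity)

lemma frobNorm_nonneg (A : Matrix (Fin n) (Fin n) ℝ) : 0 ≤ frobNorm A := Real.sqrt_nonneg _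

lemma rNorm_nonneg (A : Matrix (Fin n) (Fin n) ℝ) (r : ℕ) : 0 ≤ rNorm A r := Real.sqrt_nonneg _

lemma sq_rNorm (A : Matrix (Fin n) (Fin n) ℝ) (r : ℕ) :
    (rNorm A r) ^ 2 = ∑ k ∈ Finset.range r, (sv A (k + 1)) ^ 2 :=
  Real.sq_sqrt (by positivity)

theorem keyIneq (hr1 : 1 ≤ r) (hrn : r ≤ n) (M : Matrix (Fin n) (Fin n) ℝ)
    (Ω : Matrix (Fin n) (Fin n) ℝ) (hΩ : Ω.PosSemidef) (hΩr : Ω.rank ≤ r) :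
    minner M Ω ≤ rNorm M r * frobNorm Ω := by
  classical
  obtain ⟨hΩh, -⟩ := hΩ
  set lam := hΩh.eigenvalues with hlam
  set V := (hΩh.eigenvectorUnitary : Matrix (Fin n) (Fin n) ℝ) with hV
  set hA := Matrix.isHermitian_iff_isSymm.mpr (Matrix.isSymm_transpose_mul_self M) with hhA
  set ev := hA.eigenvalues with hev
  set W := (hA.eigenvectorUnitary : Matrix (Fin n) (Fin n) ℝ) with hW
  have hevnn : ∀ l, 0 ≤ ev l :=
    (Matrix.posSemidef_conjTranspose_mul_self M).eigenvalues_nonneg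
  -- quadratic forms
  set m : Fin n → ℝ := fun i => ∑ j, ∑ k, M j k * (V j i * V k i) with hm
  set p : Fin n → Fin n → ℝ := fun l i => ∑ j, W j l * V j i with hp
  set a : Fin n → ℝ := fun i => ∑ l, ev l * (p l i) ^ 2 with ha
  set S : Finset (Fin n) := Finset.univ.filter (fun i => lam i ≠ 0) with hS
  -- step 1 : minner M Ω = ∑ i, lam i * m i
  have step1 : minner M Ω = ∑ i, lam i * m i := by
    rw [minner_eq_sum]
    calc ∑ j, ∑ k, M j k * Ω j k
        = ∑ j, ∑ k, M j k * (∑ i, lam i * V j i * V k i) := by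
          refine Finset.sum_congr rfl fun j _ => Finset.sum_congr rfl fun k _ => ?_
          rw [← spectral_apply Ω hΩh j k]
      _ = ∑ i, lam i * m i := swap3 M lam V
  -- step 2 : restrict to S
  have step2 : ∑ i, lam i * m i = ∑ i ∈ S, lam i * m i := by
    rw [hS]
    rw [Finset.sum_filter_of_ne]
    intro i _ hne
    intro h0
    exact hne (by rw [h0, zero_mul])
  -- quadratic form of A in terms of p
  have hAquad : ∀ (u : Fin n → ℝ),
      ∑ l, (∑ k, M l k * u k) ^ 2 = ∑ l, ev l * (∑ j, W j l * u j) ^ 2 := by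
    intro u
    have e1 : ∑ j, ∑ k, ((Mᴴ * M) j k) * (u j * u k)
        = ∑ l, ev l * ((∑ j, W j l * u j) * (∑ k, W k l * u k)) := by
      rw [← quad_expand ev W u u]
      refine Finset.sum_congr rfl fun j _ => Finset.sum_congr rfl fun k _ => ?_
      rw [← spectral_apply _ hA j k]
      rfl
    have e2 : ∑ j, ∑ k, ((Mᴴ * M) j k) * (u j * u k)
        = ∑ l, 1 * ((∑ j, (Mᵀ) j l * u j) * (∑ k, (Mᵀ) k l * u k)) := by
      rw [← quad_expand (fun _ => (1:ℝ)) Mᵀ u u]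
      refine Finset.sum_congr rfl fun j _ => Finset.sum_congr rfl fun k _ => ?_
      congr 1
      simp [Matrix.mul_apply, Matrix.conjTranspose_apply, Matrix.transpose_apply]
    calc ∑ l, (∑ k, M l k * u k) ^ 2
        = ∑ l, 1 * ((∑ j, (Mᵀ) j l * u j) * (∑ k, (Mᵀ) k l * u k)) := by
          refine Finset.sum_congr rfl fun l _ => ?_
          rw [pow_two, one_mul]
          congr 1 <;> exact Finset.sum_congr rfl fun k _ => by
            rw [Matrix.transpose_apply]; ring
      _ = ∑ j, ∑ k, ((Mᴴ * M) j k) * (u j * u k) := e2.symm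
      _ = ∑ l, ev l * ((∑ j, W j l * u j) * (∑ k, W k l * u k)) := e1
      _ = ∑ l, ev l * (∑ j, W j l * u j) ^ 2 := by
          refine Finset.sum_congr rfl fun l _ => ?_
          rw [pow_two]
  -- columns of V are unit vectors
  have hVcol : ∀ i, ∑ j, V j i * V j i = 1 := by
    intro i
    have := unitary_col_orth Ω hΩh i i
    rwa [if_pos rfl] at this
  have hWcol : ∀ l, ∑ j, W j l * W j l = 1 := by
    intro l
    have := unitary_col_orth _ hA l l
    rwa [if_pos rfl] at this
  -- step 3 : m i ^ 2 ≤ a i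
  have step3 : ∀ i, (m i) ^ 2 ≤ a i := by
    intro i
    have hcs : (m i) ^ 2 ≤ (∑ j, (V j i) ^ 2) * (∑ j, (∑ k, M j k * V k i) ^ 2) := by
      have hmi : m i = ∑ j, V j i * (∑ k, M j k * V k i) := by
        rw [hm]
        refine Finset.sum_congr rfl fun j _ => ?_
        rw [Finset.mul_sum]
        exact Finset.sum_congr rfl fun k _ => by ring
      rw [hmi]
      exact Finset.sum_mul_sq_le_sq_mul_sq _ _ _
    have h1 : ∑ j, (V j i) ^ 2 = 1 := by
      rw [← hVcol i]; exact Finset.sum_congr rfl fun j _ => (pow_two _)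
    rw [h1, one_mul] at hcs
    calc (m i) ^ 2 ≤ ∑ j, (∑ k, M j k * V k i) ^ 2 := hcs
      _ = ∑ l, ev l * (∑ j, W j l * V j i) ^ 2 := hAquad _
      _ = a i := rfl
  -- c l
  set c : Fin n → ℝ := fun l => ∑ i ∈ S, (p l i) ^ 2 with hc
  have hc0 : ∀ l, 0 ≤ c l := fun l => Finset.sum_nonneg fun i _ => sq_nonneg _
  have hc1 : ∀ l, c l ≤ 1 := by
    intro l
    have h1 : ∑ i, (p l i) ^ 2 = 1 := by
      refine mix V (unitary_row_orth Ω hΩh) (fun j => W j l) (hWcol l)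
    calc c l ≤ ∑ i, (p l i) ^ 2 :=
          Finset.sum_le_sum_of_subset_of_nonneg (Finset.subset_univ S)
            (fun i _ _ => sq_nonneg _)
      _ = 1 := h1
  have hSr : (S.card : ℝ) ≤ (r : ℝ) := by
    have hrank : Ω.rank = Fintype.card {i // lam i ≠ 0} := hΩh.rank_eq_card_non_zero_eigs
    have : S.card = Fintype.card {i // lam i ≠ 0} := (Fintype.card_subtype _).symm
    have hcard : S.card ≤ r := by
      rw [this, ← hrank]; exact hΩr
    exact_mod_cast hcard
  have hcsum : ∑ l, c l ≤ (r : ℝ) := by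
    have hswap : ∑ l, c l = ∑ i ∈ S, ∑ l, (p l i) ^ 2 := Finset.sum_comm
    have hone : ∀ i, ∑ l, (p l i) ^ 2 = 1 := by
      intro i
      have := mix W (unitary_row_orth _ hA) (fun j => V j i) (hVcol i)
      rw [← this]
      refine Finset.sum_congr rfl fun l _ => ?_
      congr 1
      exact Finset.sum_congr rfl fun j _ => by ring
    rw [hswap]
    calc ∑ i ∈ S, ∑ l, (p l i) ^ 2 = ∑ i ∈ S, (1:ℝ) :=
          Finset.sum_congr rfl fun i _ => hone i
      _ = (S.card : ℝ) := by simp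
      _ ≤ (r : ℝ) := hSr
  -- topset
  obtain ⟨T, hTcard, hTtop, hTsum⟩ := exists_topset hr1 hrn M
  -- step 4 : ∑_{i∈S} a i ≤ ∑_{l∈T} ev l
  have step4 : ∑ i ∈ S, a i ≤ ∑ l ∈ T, ev l := by
    have hswap : ∑ i ∈ S, a i = ∑ l, ev l * c l := by
      simp only [ha, hc]
      calc ∑ i ∈ S, ∑ l, ev l * (p l i) ^ 2
          = ∑ l, ∑ i ∈ S, ev l * (p l i) ^ 2 := Finset.sum_comm
        _ = ∑ l, ev l * ∑ i ∈ S, (p l i) ^ 2 :=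
            Finset.sum_congr rfl fun l _ => (Finset.mul_sum _ _ _).symm
    rw [hswap]
    exact lp_bound ev c T hTcard hr1 hTtop hevnn hc0 hc1 hcsum
  -- step 5 : frobNorm Ω ^ 2 = ∑ lam^2
  have step5 : (frobNorm Ω) ^ 2 = ∑ i, (lam i) ^ 2 := by
    rw [sq_frobNorm]
    have e1 : ∑ j, ∑ k, (Ω j k) ^ 2 = ∑ j, ∑ k, Ω j k * Ω j k := by
      refine Finset.sum_congr rfl fun j _ => Finset.sum_congr rfl fun k _ => (pow_two _)
    have e2 : ∑ j, ∑ k, Ω j k * Ω j k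
        = ∑ i, lam i * (∑ j, ∑ k, Ω j k * (V j i * V k i)) := by
      calc ∑ j, ∑ k, Ω j k * Ω j k
          = ∑ j, ∑ k, Ω j k * (∑ i, lam i * V j i * V k i) := by
            refine Finset.sum_congr rfl fun j _ => Finset.sum_congr rfl fun k _ => ?_
            rw [← spectral_apply Ω hΩh j k]
        _ = _ := swap3 Ω lam V
    have hinner : ∀ i, (∑ j, ∑ k, Ω j k * (V j i * V k i)) = lam i := by
      intro i
      have h1 : ∑ j, ∑ k, Ω j k * (V j i * V k i)
          = ∑ l, lam l * ((∑ j, V j l * V j i) * (∑ k, V k l * V k i)) := by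
        rw [← quad_expand lam V _ _]
        refine Finset.sum_congr rfl fun j _ => Finset.sum_congr rfl fun k _ => ?_
        rw [← spectral_apply Ω hΩh j k]
      rw [h1]
      have h2 : ∀ l, ∑ j, V j l * V j i = if l = i then 1 else 0 :=
        fun l => unitary_col_orth Ω hΩh l i
      simp_rw [h2]
      simp
    calc ∑ j, ∑ k, (Ω j k) ^ 2 = ∑ j, ∑ k, Ω j k * Ω j k := e1
      _ = ∑ i, lam i * (∑ j, ∑ k, Ω j k * (V j i * V k i)) := e2
      _ = ∑ i, lam i * lam i := Finset.sum_congr rfl fun i _ => by rw [hinner i]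
      _ = ∑ i, (lam i) ^ 2 := Finset.sum_congr rfl fun i _ => (pow_two _).symm
  -- combine
  have hCS : ∑ i ∈ S, lam i * m i ≤
      Real.sqrt (∑ i ∈ S, (lam i) ^ 2) * Real.sqrt (∑ i ∈ S, (m i) ^ 2) :=
    Real.sum_mul_le_sqrt_mul_sqrt _ _ _
  have h1 : Real.sqrt (∑ i ∈ S, (lam i) ^ 2) ≤ frobNorm Ω := by
    have hle : ∑ i ∈ S, (lam i) ^ 2 ≤ ∑ i, (lam i) ^ 2 :=
      Finset.sum_le_sum_of_subset_of_nonneg (Finset.subset_univ S) (fun _ _ _ => sq_nonneg _)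
    have h2 := Real.sqrt_le_sqrt (hle.trans_eq step5.symm)
    rwa [Real.sqrt_sq (frobNorm_nonneg Ω)] at h2
  have h2 : Real.sqrt (∑ i ∈ S, (m i) ^ 2) ≤ rNorm M r := by
    have hle : ∑ i ∈ S, (m i) ^ 2 ≤ ∑ l ∈ T, ev l :=
      le_trans (Finset.sum_le_sum fun i _ => step3 i) step4
    have heq : ∑ l ∈ T, ev l = (rNorm M r) ^ 2 := by rw [hTsum, sq_rNorm]
    have h3 := Real.sqrt_le_sqrt (hle.trans_eq heq)
    rwa [Real.sqrt_sq (rNorm_nonneg M r)] at h3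
  calc minner M Ω = ∑ i ∈ S, lam i * m i := by rw [step1, step2]
    _ ≤ Real.sqrt (∑ i ∈ S, (lam i) ^ 2) * Real.sqrt (∑ i ∈ S, (m i) ^ 2) := hCS
    _ ≤ frobNorm Ω * rNorm M r :=
        mul_le_mul h1 h2 (Real.sqrt_nonneg _) (frobNorm_nonneg Ω)
    _ = rNorm M r * frobNorm Ω := mul_comm _ _

end Aux

/-- Weak duality for the reformulated Frisch–Kalman problem. -/
theorem stmt2 {n r : ℕ} (hr1 : 1 ≤ r) (hrn : r ≤ n)
    (Sg : Matrix (Fin n) (Fin n) ℝ) (hSg : Sg.PosDef)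
    (Ω : Matrix (Fin n) (Fin n) ℝ) (hΩ : Ω.PosSemidef) (hΩr : Ω.rank ≤ r)
    (hSO : (Sg - Ω).PosSemidef) (hSOd : (Sg - Ω).IsDiag)
    (Λ : Matrix (Fin n) (Fin n) ℝ) (hΛ : Λ.IsSymm) (hΛ0 : ∀ i, Λ i i = 0) :
    (frobNorm (Sg - Ω)) ^ 2 ≥
      -(rNorm (Sg + Λ) r) ^ 2 + 2 * minner Λ Sg + (frobNorm Sg) ^ 2 := by
  have hkey : minner (Sg + Λ) Ω ≤ rNorm (Sg + Λ) r * frobNorm Ω :=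
    keyIneq hr1 hrn (Sg + Λ) Ω hΩ hΩr
  have hsym : ∀ A B : Matrix (Fin n) (Fin n) ℝ, minner A B = minner B A := by
    intro A B
    rw [minner_eq_sum, minner_eq_sum]
    exact Finset.sum_congr rfl fun j _ => Finset.sum_congr rfl fun k _ => mul_comm _ _
  have hfm : ∀ A : Matrix (Fin n) (Fin n) ℝ, (frobNorm A) ^ 2 = minner A A := by
    intro A
    rw [sq_frobNorm, minner_eq_sum]
    exact Finset.sum_congr rfl fun j _ => Finset.sum_congr rfl fun k _ => pow_two _
  have f1 : minner (Sg - Ω) (Sg - Ω) = minner Sg Sg - 2 * minner Sg Ω + minner Ω Ω := by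
    simp only [minner_eq_sum, Matrix.sub_apply]
    have : ∀ j k : Fin n, (Sg j k - Ω j k) * (Sg j k - Ω j k)
        = Sg j k * Sg j k - 2 * (Sg j k * Ω j k) + Ω j k * Ω j k := fun j k => by ring
    simp_rw [this, Finset.sum_add_distrib, Finset.sum_sub_distrib, ← Finset.mul_sum]
  have f4 : minner (Sg + Λ) Ω = minner Sg Ω + minner Λ Ω := by
    simp only [minner_eq_sum, Matrix.add_apply]
    simp_rw [add_mul, Finset.sum_add_distrib]
  have hzero : minner Λ (Sg - Ω) = 0 := by
    rw [minner_eq_sum]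
    refine Finset.sum_eq_zero fun j _ => Finset.sum_eq_zero fun k _ => ?_
    by_cases h : j = k
    · subst h; rw [hΛ0 j, zero_mul]
    · exact mul_eq_zero_of_right _ (hSOd h)
  have f3 : minner Λ Sg = minner Λ Ω := by
    have : minner Λ (Sg - Ω) = minner Λ Sg - minner Λ Ω := by
      simp only [minner_eq_sum, Matrix.sub_apply]
      simp_rw [mul_sub, Finset.sum_sub_distrib]
    linarith [hzero, this]
  have hRB := sq_nonneg (rNorm (Sg + Λ) r - frobNorm Ω)
  have hR0 := rNorm_nonneg (Sg + Λ) r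
  have hB0 := frobNorm_nonneg Ω
  rw [hfm, hfm, f1]
  nlinarith [hkey, f3, f4, hRB, hfm Ω]
end

section
/- Let v = (4, 2, 1)ᵀ ∈ ℝ³ and Ω̂ = v vᵀ, a rank-1 positive semidefinite 3×3 matrix. Then for every vector d ∈ ℝ³ there exists a unique real symmetric 3×3 matrix M such that M v = 0 (equivalently, range(M) ⊆ ker(Ω̂)) and the diagonal of M equals d (i.e., M_{ii} = d_i for i = 1,2,3). In particular, for every diagonal 3×3 matrix Δ there exists Λ ∈ S_0^3 such that range(Δ + Λ) is orthogonal to range(Ω̂). -/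
open Matrix

/-- For `v = (4,2,1)ᵀ` and `Ωh = vvᵀ`, every prescribed diagonal `d`
is achieved by a unique symmetric `3×3` matrix `M` with `Mv = 0`; in particular,
for every diagonal `Δ` there is `Λ ∈ S_0^3` with `range(Δ + Λ)` orthogonal to
`range(Ωh)`. -/
theorem stmt14 (v : Fin 3 → ℝ) (hv : v = ![4, 2, 1]) :
    (∀ d : Fin 3 → ℝ, ∃! M : Matrix (Fin 3) (Fin 3) ℝ,
      M.IsSymm ∧ M.mulVec v = 0 ∧ ∀ i, M i i = d i) ∧
    (∀ Δ : Matrix (Fin 3) (Fin 3) ℝ, Δ.IsDiag →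
      ∃ Λ : Matrix (Fin 3) (Fin 3) ℝ, Λ.IsSymm ∧ (∀ i, Λ i i = 0) ∧
        rangesOrth (Δ + Λ) (Matrix.vecMulVec v v)) := by
  subst hv
  have hpart1 : ∀ d : Fin 3 → ℝ, ∃! M : Matrix (Fin 3) (Fin 3) ℝ,
      M.IsSymm ∧ M.mulVec ![4, 2, 1] = 0 ∧ ∀ i, M i i = d i := by
    intro d
    refine ⟨!![d 0, (-16*d 0 - 4*d 1 + d 2)/16, (-16*d 0 + 4*d 1 - d 2)/8;
              (-16*d 0 - 4*d 1 + d 2)/16, d 1, (16*d 0 - 4*d 1 - d 2)/4;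
              (-16*d 0 + 4*d 1 - d 2)/8, (16*d 0 - 4*d 1 - d 2)/4, d 2],
      ⟨?_, ?_, ?_⟩, ?_⟩
    · show _ᵀ = _
      ext i j
      fin_cases i <;> fin_cases j <;> simp
    · funext i
      fin_cases i <;>
        simp [Matrix.mulVec, dotProduct, Fin.sum_univ_three] <;> ring
    · intro i; fin_cases i <;> simp
    · rintro M ⟨hs, hmv, hd⟩
      have h01 : M 1 0 = M 0 1 := congrFun (congrFun hs 0) 1
      have h02 : M 2 0 = M 0 2 := congrFun (congrFun hs 0) 2
      have h12 : M 2 1 = M 1 2 := congrFun (congrFun hs 1) 2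
      have e0 := congrFun hmv 0
      have e1 := congrFun hmv 1
      have e2 := congrFun hmv 2
      simp [Matrix.mulVec, dotProduct, Fin.sum_univ_three] at e0 e1 e2
      have hd0 := hd 0; have hd1 := hd 1; have hd2 := hd 2
      ext i j
      fin_cases i <;> fin_cases j <;> simp <;> linarith
  refine ⟨hpart1, ?_⟩
  intro Δ hΔ
  obtain ⟨M, ⟨hs, hmv, hd⟩, -⟩ := hpart1 (fun i => Δ i i)
  refine ⟨M - Δ, ?_, ?_, ?_⟩
  · show _ᵀ = _
    ext i j
    by_cases hij : i = j
    · subst hij; simp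
    · simp [hΔ hij, hΔ (Ne.symm hij), ← congrFun (congrFun hs i) j]
  · intro i; simp [hd i]
  · have hM : Δ + (M - Δ) = M := by abel
    rw [hM]
    intro x y
    have h01 : M 1 0 = M 0 1 := congrFun (congrFun hs 0) 1
    have h02 : M 2 0 = M 0 2 := congrFun (congrFun hs 0) 2
    have h12 : M 2 1 = M 1 2 := congrFun (congrFun hs 1) 2
    have e0 := congrFun hmv 0
    have e1 := congrFun hmv 1
    have e2 := congrFun hmv 2
    simp [Matrix.mulVec, dotProduct, Fin.sum_univ_three] at e0 e1 e2
    have E : ∀ j : Fin 3, 4 * M 0 j + 2 * M 1 j + M 2 j = 0 := by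
      intro j; fin_cases j <;> simp <;> linarith
    simp only [Matrix.mulVec, dotProduct, Matrix.vecMulVec_apply,
      Fin.sum_univ_three]
    have E0 := E 0; have E1 := E 1; have E2 := E 2
    simp only [Matrix.cons_val_zero, Matrix.cons_val_one, Matrix.head_cons,
      Matrix.cons_val_two, Matrix.tail_cons] at *
    linear_combination (4*y 0 + 2*y 1 + y 2) *
      (x 0 * E0 + x 1 * E1 + x 2 * E2)
end
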